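/- Let n ≥ 2, ℓ ≥ 1, let t be an integer with 1 ≤ t ≤ ℓ, and let v₁,…,vₙ : Fin ℓ → ℝ be nonzero binary vectors. For each i define Aᵢ = (∑_{j ≠ i} n^{−3(⟨vᵢ,vⱼ⟩+1)} · (∑_t vⱼ t)) / (∑_{k ≠ i} n^{−3(⟨vᵢ,vₖ⟩+1)} + n^{−3(t+1)}), where n^x denotes the real power of n. Then: (a) if there exist i ≠ j with ⟨vᵢ, vⱼ⟩ ≤ t, there exists i with Aᵢ ≥ 1/(n+1); and (b) if ⟨vᵢ, vⱼ⟩ ≥ t + 1 for all i ≠ j, then Aᵢ ≤ ℓ/n² for every i. -/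
import Mathlib


open Finset

/-- The yes/no gap of the attention entries in the construction showing a single
attention unit with input and output MLPs solves `Min-IP_{n,ℓ,t}`. -/
theorem stmt9 (n ℓ t : ℕ) (hn : 2 ≤ n) (hℓ : 1 ≤ ℓ) (ht1 : 1 ≤ t) (ht2 : t ≤ ℓ)
    (v : Fin n → Fin ℓ → ℝ)
    (hbin : ∀ i s, v i s = 0 ∨ v i s = 1)
    (hnz : ∀ i, v i ≠ 0)
    (A : Fin n → ℝ)
    (hA : ∀ i, A i =
      (∑ j ∈ Finset.univ.erase i,
          (n : ℝ) ^ (-(3 * ((∑ s, v i s * v j s) + 1))) * (∑ s, v j s)) /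
        ((∑ k ∈ Finset.univ.erase i, (n : ℝ) ^ (-(3 * ((∑ s, v i s * v k s) + 1)))) +
          (n : ℝ) ^ (-(3 * ((t : ℝ) + 1))))) :
    ((∃ i j : Fin n, i ≠ j ∧ (∑ s, v i s * v j s) ≤ (t : ℝ)) →
      ∃ i, 1 / ((n : ℝ) + 1) ≤ A i) ∧
    ((∀ i j : Fin n, i ≠ j → (t : ℝ) + 1 ≤ ∑ s, v i s * v j s) →
      ∀ i, A i ≤ (ℓ : ℝ) / (n : ℝ) ^ 2) := by
  have hn1 : (1:ℝ) < n := by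
    have : (2:ℝ) ≤ n := by exact_mod_cast hn
    linarith
  have hn0 : (0:ℝ) < n := by linarith
  have hvnn : ∀ j s, (0:ℝ) ≤ v j s := fun j s => by
    rcases hbin j s with h | h <;> simp [h]
  have hm1 : ∀ j, (1:ℝ) ≤ ∑ s, v j s := by
    intro j
    obtain ⟨s0, hs0⟩ := Function.ne_iff.mp (hnz j)
    have h1 : v j s0 = 1 := (hbin j s0).resolve_left hs0
    calc (1:ℝ) = v j s0 := h1.symm
      _ ≤ ∑ s, v j s := Finset.single_le_sum (fun s _ => hvnn j s) (mem_univ s0)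
  have hmℓ : ∀ j, (∑ s, v j s) ≤ (ℓ:ℝ) := by
    intro j
    calc ∑ s, v j s ≤ ∑ _s : Fin ℓ, (1:ℝ) :=
          Finset.sum_le_sum (fun s _ => by rcases hbin j s with h | h <;> simp [h])
      _ = ℓ := by simp
  have hwpos : ∀ x : ℝ, (0:ℝ) < (n:ℝ) ^ x := fun x => Real.rpow_pos_of_pos hn0 x
  constructor
  · rintro ⟨i, j, hij, hle⟩
    refine ⟨i, ?_⟩
    rw [hA i]
    set N := ∑ j ∈ univ.erase i,
        (n:ℝ) ^ (-(3 * ((∑ s, v i s * v j s) + 1))) * (∑ s, v j s) with hNdef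
    set W := ∑ k ∈ univ.erase i, (n:ℝ) ^ (-(3 * ((∑ s, v i s * v k s) + 1))) with hWdef
    set e := (n:ℝ) ^ (-(3 * ((t:ℝ) + 1))) with hedef
    have hWN : W ≤ N := by
      apply Finset.sum_le_sum
      intro k _
      exact le_mul_of_one_le_right (hwpos _).le (hm1 k)
    have heN : e ≤ N := by
      have h1 : e ≤ (n:ℝ) ^ (-(3 * ((∑ s, v i s * v j s) + 1))) := by
        rw [hedef, Real.rpow_le_rpow_left_iff hn1]
        linarith
      have h2 : (n:ℝ) ^ (-(3 * ((∑ s, v i s * v j s) + 1)))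
          ≤ (n:ℝ) ^ (-(3 * ((∑ s, v i s * v j s) + 1))) * (∑ s, v j s) :=
        le_mul_of_one_le_right (hwpos _).le (hm1 j)
      have h3 : (n:ℝ) ^ (-(3 * ((∑ s, v i s * v j s) + 1))) * (∑ s, v j s) ≤ N := by
        apply Finset.single_le_sum
          (f := fun k => (n:ℝ) ^ (-(3 * ((∑ s, v i s * v k s) + 1))) * (∑ s, v k s))
        · intro k _
          exact mul_nonneg (hwpos _).le (le_trans zero_le_one (hm1 k))
        · exact mem_erase.mpr ⟨hij.symm, mem_univ j⟩
      linarith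
    have hepos : 0 < e := hwpos _
    have hWnn : 0 ≤ W := Finset.sum_nonneg fun k _ => (hwpos _).le
    have hD : 0 < W + e := by linarith
    rw [le_div_iff₀ hD]
    have hNpos : 0 < N := lt_of_lt_of_le hepos heN
    rw [div_mul_eq_mul_div, one_mul, div_le_iff₀ (by linarith : (0:ℝ) < (n:ℝ) + 1)]
    nlinarith
  · intro hno i
    rw [hA i]
    set N := ∑ j ∈ univ.erase i,
        (n:ℝ) ^ (-(3 * ((∑ s, v i s * v j s) + 1))) * (∑ s, v j s) with hNdef
    set W := ∑ k ∈ univ.erase i, (n:ℝ) ^ (-(3 * ((∑ s, v i s * v k s) + 1))) with hWdef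
    set e := (n:ℝ) ^ (-(3 * ((t:ℝ) + 1))) with hedef
    have hepos : 0 < e := hwpos _
    have hWnn : 0 ≤ W := Finset.sum_nonneg fun k _ => (hwpos _).le
    have hD : 0 < W + e := by linarith
    have hℓnn : (0:ℝ) ≤ ℓ := by positivity
    have hid : (n:ℝ) * (n:ℝ) ^ (-(3 * ((t:ℝ) + 2))) = e / (n:ℝ) ^ 2 := by
      rw [hedef, ← Real.rpow_natCast (n:ℝ) 2, ← Real.rpow_sub hn0]
      nth_rewrite 1 [← Real.rpow_one (n:ℝ)]
      rw [← Real.rpow_add hn0]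
      congr 1
      push_cast
      ring
    have hNle : N ≤ (n:ℝ) * ((n:ℝ) ^ (-(3 * ((t:ℝ) + 2))) * (ℓ:ℝ)) := by
      calc N ≤ ∑ _j ∈ univ.erase i, (n:ℝ) ^ (-(3 * ((t:ℝ) + 2))) * (ℓ:ℝ) := by
            apply Finset.sum_le_sum
            intro k hk
            have hk' : i ≠ k := fun h => (mem_erase.mp hk).1 h.symm
            have hc := hno i k hk'
            apply mul_le_mul
            · rw [Real.rpow_le_rpow_left_iff hn1]; linarith
            · exact hmℓ k
            · linarith [hm1 k]
            · exact (hwpos _).le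
        _ = ((univ.erase i).card : ℝ) * ((n:ℝ) ^ (-(3 * ((t:ℝ) + 2))) * (ℓ:ℝ)) := by
            rw [Finset.sum_const, nsmul_eq_mul]
        _ ≤ (n:ℝ) * ((n:ℝ) ^ (-(3 * ((t:ℝ) + 2))) * (ℓ:ℝ)) := by
            apply mul_le_mul_of_nonneg_right _
              (mul_nonneg (hwpos _).le hℓnn)
            have h1 : (univ.erase i).card ≤ (univ : Finset (Fin n)).card :=
              Finset.card_le_card (Finset.erase_subset _ _)
            have h2 : ((univ : Finset (Fin n)).card : ℝ) = n := by simp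
            calc ((univ.erase i).card : ℝ) ≤ ((univ : Finset (Fin n)).card : ℝ) := by
                  exact_mod_cast h1
              _ = n := h2
    rw [div_le_iff₀ hD]
    have key : (n:ℝ) * ((n:ℝ) ^ (-(3 * ((t:ℝ) + 2))) * (ℓ:ℝ)) = (ℓ:ℝ) / (n:ℝ) ^ 2 * e := by
      rw [show (n:ℝ) * ((n:ℝ) ^ (-(3 * ((t:ℝ) + 2))) * (ℓ:ℝ))
          = ((n:ℝ) * (n:ℝ) ^ (-(3 * ((t:ℝ) + 2)))) * (ℓ:ℝ) from by ring, hid]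
      ring
    have hWe : (ℓ:ℝ) / (n:ℝ) ^ 2 * e ≤ (ℓ:ℝ) / (n:ℝ) ^ 2 * (W + e) := by
      apply mul_le_mul_of_nonneg_left (by linarith) (by positivity)
    linarith [hNle, key, hWe]
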